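/- Let (r,ρ) ∈ 𝒩𝒞, let x ∈ (0,1), and let a = (a_1,a_2,a_3,…) ∈ {r,ρ}^ℕ be a sequence such that (a_1·a_2·…·a_n)·x ∈ [0,1] for every positive integer n. Then sup{(a_1·a_2·…·a_n)·x : n a positive integer} = 1 if and only if the point (x, a_1·x, (a_1·a_2)·x, (a_1·a_2·a_3)·x, …) is an end-point of M_{r,ρ}. -/

import Mathlib

/-- `(r, ρ) ∈ 𝒩𝒞`: `0 < r < 1 < ρ` and `r^k = ρ^ℓ` only for `k = ℓ = 0`. -/
def NC (r ρ : ℝ) : Prop :=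
  0 < r ∧ r < 1 ∧ 1 < ρ ∧ ∀ k l : ℤ, r ^ k = ρ ^ l ↔ k = 0 ∧ l = 0

/-- The Mahavier product `M_{r,ρ} ⊆ [0,1]^ℕ`. -/
def Mset (r ρ : ℝ) : Set (ℕ → ℝ) :=
  {x | (∀ i, x i ∈ Set.Icc (0:ℝ) 1) ∧ ∀ i, x (i + 1) = r * x i ∨ x (i + 1) = ρ * x i}

/-- The shift map `σ_{r,ρ}` on `M_{r,ρ}`. -/
def shiftM (r ρ : ℝ) (x : Mset r ρ) : Mset r ρ :=
  ⟨fun i => x.1 (i + 1), fun i => x.2.1 (i + 1), fun i => x.2.2 (i + 1)⟩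

/-- A subset `A` of a topological space is an arc if it is homeomorphic to `[0,1]`. -/
def IsArc {X : Type*} [TopologicalSpace X] (A : Set X) : Prop :=
  Nonempty (Set.Icc (0:ℝ) 1 ≃ₜ A)

/-- `x` is an end-point of the arc `A` if some homeomorphism `φ : [0,1] → A` has `φ 0 = x`. -/
def IsEndpointOfArc {X : Type*} [TopologicalSpace X] (A : Set X) (x : X) : Prop :=
  ∃ φ : Set.Icc (0:ℝ) 1 ≃ₜ A, ((φ ⟨0, by norm_num⟩ : A) : X) = x

/-- `x` is an end-point of the space `X` if it is an end-point of every arc in `X`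
containing it. -/
def IsEndpoint {X : Type*} [TopologicalSpace X] (x : X) : Prop :=
  ∀ A : Set X, IsArc A → x ∈ A → IsEndpointOfArc A x

open Set

lemma msetPos {r ρ : ℝ} (hr : 0 < r) (hρ : 0 < ρ) {q : ℕ → ℝ} (hq : q ∈ Mset r ρ)
    (h0 : 0 < q 0) : ∀ n, 0 < q n := by
  intro n; induction n with
  | zero => exact h0
  | succ n ih => rcases hq.2 n with h | h <;> rw [h] <;> positivity

lemma msetZero {r ρ : ℝ} {q : ℕ → ℝ} (hq : q ∈ Mset r ρ)
    (h0 : q 0 = 0) : ∀ n, q n = 0 := by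
  intro n; induction n with
  | zero => exact h0
  | succ n ih => rcases hq.2 n with h | h <;> rw [h, ih, mul_zero]

lemma noIntVal {k : ℝ → ℝ} {c d s u0 u1 : ℝ}
    (hk : ContinuousOn k (Icc c d)) (hinj : InjOn k (Icc c d))
    (hs : s ∈ Icc c d) (h0 : u0 ∈ Icc c d) (h1 : u1 ∈ Icc c d)
    (hl : k u0 < k s) (hg : k s < k u1) (hout : s ∉ uIcc u0 u1) : False := by
  have hsub : uIcc u0 u1 ⊆ Icc c d := Set.ordConnected_Icc.uIcc_subset h0 h1
  have hmem : k s ∈ uIcc (k u0) (k u1) := Set.mem_uIcc.mpr (Or.inl ⟨hl.le, hg.le⟩)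
  obtain ⟨w, hw, hwv⟩ := intermediate_value_uIcc (hk.mono hsub) hmem
  exact hout ((hinj (hsub hw) hs hwv) ▸ hw)

lemma existsGt {k : ℝ → ℝ} {c d s : ℝ}
    (hk : ContinuousOn k (Icc c d)) (hinj : InjOn k (Icc c d))
    (hs : s ∈ Ioo c d) : ∃ u ∈ Icc c d, k s < k u := by
  by_contra hcon
  push_neg at hcon
  have hcs : c ∈ Icc c d := ⟨le_refl c, (hs.1.trans hs.2).le⟩
  have hds : d ∈ Icc c d := ⟨(hs.1.trans hs.2).le, le_refl d⟩
  have hsm : s ∈ Icc c d := ⟨hs.1.le, hs.2.le⟩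
  have hc' : k c < k s :=
    lt_of_le_of_ne (hcon c hcs) (fun h => (ne_of_lt hs.1) (hinj hcs hsm h))
  have hd' : k d < k s :=
    lt_of_le_of_ne (hcon d hds) (fun h => (ne_of_gt hs.2) (hinj hds hsm h))
  set w : ℝ := (max (k c) (k d) + k s) / 2 with hw
  have hmx := max_lt hc' hd'
  have hw1 : max (k c) (k d) < w := by rw [hw]; linarith
  have hw2 : w < k s := by rw [hw]; linarith
  obtain ⟨p1, hp1, hp1v⟩ := intermediate_value_Icc hs.1.le
    (hk.mono (Icc_subset_Icc_right hs.2.le))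
    (⟨((le_max_left _ _).trans hw1.le), hw2.le⟩ : w ∈ Icc (k c) (k s))
  obtain ⟨p2, hp2, hp2v⟩ := intermediate_value_Icc' hs.2.le
    (hk.mono (Icc_subset_Icc_left hs.1.le))
    (⟨((le_max_right _ _).trans hw1.le), hw2.le⟩ : w ∈ Icc (k d) (k s))
  have e : p1 = p2 := hinj ⟨hp1.1, hp1.2.trans hs.2.le⟩ ⟨hs.1.le.trans hp2.1, hp2.2⟩
    (hp1v.trans hp2v.symm)
  have : p1 = s := le_antisymm hp1.2 (e ▸ hp2.1)
  rw [this] at hp1v; linarith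

lemma legStruct {r ρ : ℝ} (hr : 0 < r) (hr1 : r < 1) (hρ : 1 < ρ)
    {x : ℝ} (hx : 0 < x) {a : ℕ → ℝ} (ha : ∀ n, a n = r ∨ a n = ρ)
    {A : Set (Mset r ρ)} (φ : Set.Icc (0:ℝ) 1 ≃ₜ A)
    (F : ℝ → ℕ → ℝ)
    (hF : ∀ u, F u = ((φ (Set.projIcc 0 1 zero_le_one u) : Mset r ρ) : ℕ → ℝ))
    {c d s : ℝ} (hs : s ∈ Set.Icc c d)
    (hFs : F s = fun n => (∏ i ∈ Finset.range n, a i) * x)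
    (hpos : ∀ u ∈ Set.Icc c d, F u 0 ≠ 0) :
    ∀ u ∈ Set.Icc c d, ∀ n, F u n = (∏ i ∈ Finset.range n, a i) * F u 0 := by
  have hρ0 : (0:ℝ) < ρ := lt_trans zero_lt_one hρ
  have hrρ : r < ρ := hr1.trans hρ
  have hmem : ∀ u, F u ∈ Mset r ρ := fun u => by
    rw [hF]; exact ((φ (Set.projIcc 0 1 zero_le_one u)) : Mset r ρ).2
  have hposall : ∀ u ∈ Set.Icc c d, ∀ n, 0 < F u n := by
    intro u hu n
    exact msetPos hr hρ0 (hmem u)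
      (lt_of_le_of_ne ((hmem u).1 0).1 (Ne.symm (hpos u hu))) n
  have hcont : ∀ n, Continuous (fun u => F u n) := by
    intro n
    have he : (fun u => F u n)
        = fun u => ((φ (Set.projIcc 0 1 zero_le_one u) : Mset r ρ) : ℕ → ℝ) n := by
      funext u; rw [hF]
    rw [he]
    exact (continuous_apply n).comp (continuous_subtype_val.comp
      (continuous_subtype_val.comp (φ.continuous.comp continuous_projIcc)))
  intro u hu n
  induction n with
  | zero => simp
  | succ n ih =>
    -- the ratio function
    set χ : ℝ → ℝ := fun v => F v (n + 1) / F v n with hχ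
    have hχdef : ∀ v, χ v = F v (n + 1) / F v n := fun v => rfl
    have hχcont : ContinuousOn χ (Set.Icc c d) :=
      ((hcont (n+1)).continuousOn).div ((hcont n).continuousOn)
        (fun v hv => (hposall v hv n).ne')
    have hχval : ∀ v ∈ Set.Icc c d, χ v = r ∨ χ v = ρ := by
      intro v hv
      rcases (hmem v).2 n with h | h
      · left; rw [hχdef, h]; exact mul_div_cancel_right₀ r (hposall v hv n).ne'
      · right; rw [hχdef, h]; exact mul_div_cancel_right₀ ρ (hposall v hv n).ne'
    have hPx : (∏ i ∈ Finset.range n, a i) * x ≠ 0 := by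
      have : 0 < (∏ i ∈ Finset.range n, a i) * x := by
        apply mul_pos _ hx
        exact Finset.prod_pos (fun i _ => by rcases ha i with h | h <;> rw [h] <;> positivity)
      exact this.ne'
    have hχs : χ s = a n := by
      rw [hχdef, hFs]
      simp only [Finset.prod_range_succ]
      field_simp
      exact mul_div_cancel_left₀ _ (left_ne_zero_of_mul hPx)
    have hχu : χ u = a n := by
      by_contra hne
      have himg : IsPreconnected (χ '' Set.Icc c d) :=
        (isPreconnected_Icc).image χ hχcont
      have hrm : r ∈ χ '' Set.Icc c d ∧ ρ ∈ χ '' Set.Icc c d := by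
        rcases hχval u hu with h | h <;> rcases ha n with h' | h'
        · exact absurd (h.trans h'.symm) hne
        · exact ⟨⟨u, hu, h⟩, ⟨s, hs, hχs.trans h'⟩⟩
        · exact ⟨⟨s, hs, hχs.trans h'⟩, ⟨u, hu, h⟩⟩
        · exact absurd (h.trans h'.symm) hne
      have hmid : (r + ρ)/2 ∈ χ '' Set.Icc c d := by
        apply himg.ordConnected.out hrm.1 hrm.2
        constructor <;> linarith
      obtain ⟨w, hw, hwv⟩ := hmid
      rcases hχval w hw with h | h <;> rw [hwv] at h <;> linarith
    have hstep : F u (n + 1) = a n * F u n := by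
      have h2 := hχu
      rw [hχdef, div_eq_iff (hposall u hu n).ne'] at h2
      linarith [h2]
    rw [hstep, ih, Finset.prod_range_succ]; ring

/-- The reflection homeomorphism of `[0,1]`. -/
def reflIcc : Set.Icc (0:ℝ) 1 ≃ₜ Set.Icc (0:ℝ) 1 :=
{ toFun := fun u => ⟨1 - u.1, ⟨by linarith [u.2.2], by linarith [u.2.1]⟩⟩,
  invFun := fun u => ⟨1 - u.1, ⟨by linarith [u.2.2], by linarith [u.2.1]⟩⟩,
  left_inv := fun u => by ext; simp,
  right_inv := fun u => by ext; simp,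
  continuous_toFun := Continuous.subtype_mk (continuous_const.sub continuous_subtype_val) _,
  continuous_invFun := Continuous.subtype_mk (continuous_const.sub continuous_subtype_val) _ }

/-- Characterization of end-points of `M_{r,ρ}` lying on the leg determined by a sequence
`a ∈ {r,ρ}^ℕ`: the point `(x, a₁x, a₂a₁x, …)` is an end-point of `M_{r,ρ}` iff the supremum
of its coordinates equals `1`. -/
theorem stmt5 (r ρ : ℝ) (h : NC r ρ) (x : ℝ) (hx : x ∈ Set.Ioo (0:ℝ) 1)
    (a : ℕ → ℝ) (ha : ∀ n, a n = r ∨ a n = ρ)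
    (hin : ∀ n : ℕ, 1 ≤ n → (∏ i ∈ Finset.range n, a i) * x ∈ Set.Icc (0:ℝ) 1)
    (hp : (fun n => (∏ i ∈ Finset.range n, a i) * x) ∈ Mset r ρ) :
    sSup {y : ℝ | ∃ n : ℕ, 1 ≤ n ∧ y = (∏ i ∈ Finset.range n, a i) * x} = 1 ↔
      IsEndpoint (X := Mset r ρ) ⟨fun n => (∏ i ∈ Finset.range n, a i) * x, hp⟩ := by
  obtain ⟨hr, hr1, hρ1, -⟩ := h
  have hρ0 : (0:ℝ) < ρ := lt_trans zero_lt_one hρ1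
  obtain ⟨hx0, hx1⟩ := hx
  have hPpos : ∀ n, 0 < ∏ i ∈ Finset.range n, a i :=
    fun n => Finset.prod_pos (fun i _ => by rcases ha i with h' | h' <;> rw [h'] <;> positivity)
  set S : Set ℝ := {y : ℝ | ∃ n : ℕ, 1 ≤ n ∧ y = (∏ i ∈ Finset.range n, a i) * x} with hSdef
  set p : Mset r ρ := ⟨fun n => (∏ i ∈ Finset.range n, a i) * x, hp⟩ with hpdef
  have hub : ∀ y ∈ S, y ≤ 1 := by rintro y ⟨n, hn, rfl⟩; exact (hin n hn).2
  have hSne : S.Nonempty := ⟨(∏ i ∈ Finset.range 1, a i) * x, 1, le_refl 1, rfl⟩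
  have hSbdd : BddAbove S := ⟨1, hub⟩
  have hSle1 : sSup S ≤ 1 := csSup_le hSne hub
  constructor
  · -- sup = 1 → endpoint
    intro hsup A hA hpA
    obtain ⟨ψ⟩ := hA
    set s' : Set.Icc (0:ℝ) 1 := ψ.symm ⟨p, hpA⟩ with hs'
    have hψs' : ψ s' = ⟨p, hpA⟩ := ψ.apply_symm_apply _
    rcases eq_or_lt_of_le s'.2.1 with h0 | h0
    · -- s' = 0 : ψ itself works
      refine ⟨ψ, ?_⟩
      have : (⟨0, by norm_num⟩ : Set.Icc (0:ℝ) 1) = s' := Subtype.ext h0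
      rw [this, hψs']
    · rcases eq_or_lt_of_le s'.2.2 with h1 | h1
      · -- s' = 1 : reflect
        refine ⟨reflIcc.trans ψ, ?_⟩
        have : reflIcc (⟨0, by norm_num⟩ : Set.Icc (0:ℝ) 1) = s' := by
          apply Subtype.ext
          show (1:ℝ) - 0 = (s' : ℝ)
          rw [h1]; norm_num
        show ((ψ (reflIcc ⟨0, by norm_num⟩) : A) : Mset r ρ) = p
        rw [this, hψs']
      · -- interior : contradiction with sup = 1
        exfalso
        set sr : ℝ := (s' : ℝ) with hsr
        set F : ℝ → ℕ → ℝ :=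
          fun u => ((ψ (Set.projIcc 0 1 zero_le_one u) : Mset r ρ) : ℕ → ℝ) with hFdef
        have hproj : Set.projIcc 0 1 zero_le_one sr = s' := by
          rw [Set.projIcc_of_mem zero_le_one s'.2]
        have hFs : F sr = fun n => (∏ i ∈ Finset.range n, a i) * x := by
          show ((ψ (Set.projIcc 0 1 zero_le_one sr) : Mset r ρ) : ℕ → ℝ) = _
          rw [hproj, hψs']
        have hFmem : ∀ u, F u ∈ Mset r ρ :=
          fun u => ((ψ (Set.projIcc 0 1 zero_le_one u)) : Mset r ρ).2
        -- find a zero-free interval around sr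
        have hJ : ∃ cc dd : ℝ, sr ∈ Set.Ioo cc dd ∧ Set.Icc cc dd ⊆ Set.Icc 0 1 ∧
            ∀ u ∈ Set.Icc cc dd, F u 0 ≠ 0 := by
          by_cases hz : ∃ z : Set.Icc (0:ℝ) 1, ((ψ z : Mset r ρ) : ℕ → ℝ) 0 = 0
          · obtain ⟨z, hz0⟩ := hz
            have hzs : (z : ℝ) ≠ sr := by
              intro hzz
              have : z = s' := Subtype.ext hzz
              rw [this, hψs'] at hz0
              have : (1:ℝ) * x = 0 := by simpa [hpdef] using hz0
              nlinarith
            have hkey : ∀ u ∈ Set.Icc (0:ℝ) 1, u ≠ (z:ℝ) → F u 0 ≠ 0 := by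
              intro u hu hune hF0
              have hall : ∀ n, F u n = 0 := msetZero (hFmem u) hF0
              have hallz : ∀ n, ((ψ z : Mset r ρ) : ℕ → ℝ) n = 0 :=
                msetZero ((ψ z) : Mset r ρ).2 hz0
              have heq : ψ (Set.projIcc 0 1 zero_le_one u) = ψ z := by
                apply Subtype.ext; apply Subtype.ext
                funext n; rw [show ((ψ (Set.projIcc 0 1 zero_le_one u) : Mset r ρ) : ℕ → ℝ) n
                  = F u n from rfl, hall n, hallz n]
              have := ψ.injective heq
              rw [Set.projIcc_of_mem zero_le_one hu] at this
              exact hune (congrArg Subtype.val this)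
            rcases lt_or_gt_of_ne hzs with hlt | hgt
            · refine ⟨((z:ℝ) + sr)/2, 1, ⟨by linarith, h1⟩, ?_, ?_⟩
              · apply Set.Icc_subset_Icc_left; have := z.2.1; linarith
              · intro u hu
                apply hkey u ⟨by linarith [hu.1, z.2.1], hu.2⟩
                intro hne; rw [hne] at hu; have := hu.1; linarith
            · refine ⟨0, (sr + (z:ℝ))/2, ⟨h0, by linarith⟩, ?_, ?_⟩
              · apply Set.Icc_subset_Icc_right; have := z.2.2; linarith
              · intro u hu
                apply hkey u ⟨hu.1, by linarith [hu.2, z.2.2]⟩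
                intro hne; rw [hne] at hu; have := hu.2; linarith
          · push_neg at hz
            exact ⟨0, 1, ⟨h0, h1⟩, le_refl _, fun u _ => hz _⟩
        obtain ⟨cc, dd, hccdd, hsub, hposJ⟩ := hJ
        have hsmem : sr ∈ Set.Icc cc dd := ⟨hccdd.1.le, hccdd.2.le⟩
        have hstruct := legStruct hr hr1 hρ1 hx0 ha ψ F (fun u => rfl) hsmem hFs hposJ
        have hcont0 : Continuous (fun u => F u 0) :=
          (continuous_apply 0).comp (continuous_subtype_val.comp
            (continuous_subtype_val.comp (ψ.continuous.comp continuous_projIcc)))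
        have hginj : Set.InjOn (fun u => F u 0) (Set.Icc cc dd) := by
          intro u hu v hv huv
          have hFeq : F u = F v := by
            funext n
            rw [hstruct u hu n, hstruct v hv n]
            show (∏ i ∈ Finset.range n, a i) * (fun u => F u 0) u
              = (∏ i ∈ Finset.range n, a i) * (fun u => F u 0) v
            rw [huv]
          have heq : ψ (Set.projIcc 0 1 zero_le_one u) = ψ (Set.projIcc 0 1 zero_le_one v) :=
            Subtype.ext (Subtype.ext hFeq)
          have h3 := ψ.injective heq
          rw [Set.projIcc_of_mem zero_le_one (hsub hu),
            Set.projIcc_of_mem zero_le_one (hsub hv)] at h3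
          exact congrArg Subtype.val h3
        obtain ⟨ustar, hustar, hgt⟩ := existsGt hcont0.continuousOn hginj hccdd
        have hgs : F sr 0 = x := by rw [hFs]; simp
        have hgt' : x < F ustar 0 := by
          have : (fun u => F u 0) sr < (fun u => F u 0) ustar := hgt
          simpa [hgs] using this
        have hg0 : 0 < F ustar 0 := hx0.trans hgt'
        have hle : ∀ y ∈ S, y ≤ x / F ustar 0 := by
          rintro y ⟨n, hn, rfl⟩
          have h5 : F ustar n = (∏ i ∈ Finset.range n, a i) * F ustar 0 := hstruct ustar hustar n
          have h6 : F ustar n ≤ 1 := ((hFmem ustar).1 n).2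
          rw [le_div_iff₀ hg0]
          nlinarith [hPpos n]
        have hfin : sSup S ≤ x / F ustar 0 := csSup_le hSne hle
        have : x / F ustar 0 < 1 := (div_lt_one hg0).mpr hgt'
        linarith
  · -- endpoint → sup = 1
    intro hend
    by_contra hne
    have hslt : sSup S < 1 := lt_of_le_of_ne hSle1 hne
    set c0 : ℝ := max x (sSup S) with hc0
    have hc0pos : 0 < c0 := lt_of_lt_of_le hx0 (le_max_left _ _)
    have hc0lt : c0 < 1 := max_lt hx1 hslt
    set T : ℝ := 1 / c0 with hT
    have hT1 : 1 < T := by rw [hT, lt_div_iff₀ hc0pos, one_mul]; exact hc0lt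
    have hTc : T * c0 = 1 := by rw [hT]; field_simp
    have hcoord : ∀ n, (∏ i ∈ Finset.range n, a i) * x ≤ c0 := by
      intro n
      rcases Nat.eq_zero_or_pos n with hn | hn
      · subst hn
        simp only [Finset.prod_range_zero, one_mul]
        exact le_max_left _ _
      · exact le_trans (le_csSup hSbdd ⟨n, hn, rfl⟩) (le_max_right _ _)
    have hmemf : ∀ u : Set.Icc (0:ℝ) 1,
        (fun n => (1/2 + (u:ℝ) * (T - 1/2)) * ((∏ i ∈ Finset.range n, a i) * x))
          ∈ Mset r ρ := by
      intro u
      have hθ1 : 1/2 ≤ 1/2 + (u:ℝ) * (T - 1/2) := by nlinarith [u.2.1, u.2.2]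
      have hθ2 : 1/2 + (u:ℝ) * (T - 1/2) ≤ T := by nlinarith [u.2.1, u.2.2]
      constructor
      · intro n
        have hPx : 0 < (∏ i ∈ Finset.range n, a i) * x := mul_pos (hPpos n) hx0
        constructor
        · nlinarith
        · calc (1/2 + (u:ℝ) * (T - 1/2)) * ((∏ i ∈ Finset.range n, a i) * x)
              ≤ T * c0 := mul_le_mul hθ2 (hcoord n) hPx.le (by linarith)
          _ = 1 := hTc
      · intro n
        rcases hp.2 n with h' | h'
        · left
          show (1/2 + (u:ℝ) * (T - 1/2)) * ((∏ i ∈ Finset.range (n+1), a i) * x)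
            = r * ((1/2 + (u:ℝ) * (T - 1/2)) * ((∏ i ∈ Finset.range n, a i) * x))
          rw [show (∏ i ∈ Finset.range (n+1), a i) * x
            = r * ((∏ i ∈ Finset.range n, a i) * x) from h']
          ring
        · right
          show (1/2 + (u:ℝ) * (T - 1/2)) * ((∏ i ∈ Finset.range (n+1), a i) * x)
            = ρ * ((1/2 + (u:ℝ) * (T - 1/2)) * ((∏ i ∈ Finset.range n, a i) * x))
          rw [show (∏ i ∈ Finset.range (n+1), a i) * x
            = ρ * ((∏ i ∈ Finset.range n, a i) * x) from h']
          ring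
    set f : Set.Icc (0:ℝ) 1 → Mset r ρ :=
      fun u => ⟨fun n => (1/2 + (u:ℝ) * (T - 1/2)) * ((∏ i ∈ Finset.range n, a i) * x),
        hmemf u⟩ with hf
    have hfc : Continuous f :=
      Continuous.subtype_mk (continuous_pi (fun n =>
        ((continuous_const.add ((continuous_subtype_val).mul continuous_const)).mul
          continuous_const))) _
    have hfinj : Function.Injective f := by
      intro u v huv
      have h1 := congrArg (fun q : Mset r ρ => (q : ℕ → ℝ) 0) huv
      simp only [hf, Finset.prod_range_zero, one_mul] at h1
      apply Subtype.ext
      have hTm : T - 1/2 ≠ 0 := by intro hc; rw [sub_eq_zero] at hc; linarith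
      have h2 : (1/2 + (u:ℝ) * (T - 1/2)) = (1/2 + (v:ℝ) * (T - 1/2)) :=
        mul_right_cancel₀ (ne_of_gt hx0) h1
      have h3 : (u:ℝ) * (T - 1/2) = (v:ℝ) * (T - 1/2) := by linarith
      exact mul_right_cancel₀ hTm h3
    have harc : IsArc (Set.range f) :=
      ⟨(hfc.isClosedEmbedding hfinj).toIsEmbedding.toHomeomorph⟩
    have hpmem : p ∈ Set.range f := by
      have hTm : (0:ℝ) < T - 1/2 := by linarith
      refine ⟨⟨(1/2)/(T - 1/2), ⟨div_nonneg (by norm_num) hTm.le, ?_⟩⟩, ?_⟩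
      · rw [div_le_one hTm]; linarith
      · apply Subtype.ext
        funext n
        show (1/2 + ((1/2)/(T - 1/2)) * (T - 1/2)) * ((∏ i ∈ Finset.range n, a i) * x)
          = (∏ i ∈ Finset.range n, a i) * x
        rw [div_mul_cancel₀]
        · ring
        · exact hTm.ne'
    obtain ⟨φ, hφ0⟩ := hend (Set.range f) harc hpmem
    -- now the same leg analysis with base point 0
    set F : ℝ → ℕ → ℝ :=
      fun u => ((φ (Set.projIcc 0 1 zero_le_one u) : Mset r ρ) : ℕ → ℝ) with hFdef
    have h0mem : (0:ℝ) ∈ Set.Icc (0:ℝ) 1 := by norm_num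
    have hproj0 : Set.projIcc 0 1 zero_le_one (0:ℝ) = ⟨0, by norm_num⟩ := by
      rw [Set.projIcc_of_mem zero_le_one h0mem]
    have hFs : F 0 = fun n => (∏ i ∈ Finset.range n, a i) * x := by
      show ((φ (Set.projIcc 0 1 zero_le_one 0) : Mset r ρ) : ℕ → ℝ) = _
      rw [hproj0, hφ0]
    have hFmem : ∀ u, F u ∈ Mset r ρ :=
      fun u => ((φ (Set.projIcc 0 1 zero_le_one u)) : Mset r ρ).2
    have hposJ : ∀ u ∈ Set.Icc (0:ℝ) 1, F u 0 ≠ 0 := by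
      intro u hu
      obtain ⟨w, hw⟩ := (φ (Set.projIcc 0 1 zero_le_one u)).2
      have : F u 0 = (1/2 + (w:ℝ) * (T - 1/2)) * ((∏ i ∈ Finset.range 0, a i) * x) := by
        rw [hFdef]; simp only
        rw [← hw]
      rw [this]
      simp only [Finset.prod_range_zero, one_mul]
      have : 1/2 ≤ 1/2 + (w:ℝ) * (T - 1/2) := by nlinarith [w.2.1, w.2.2]
      nlinarith
    have h0J : (0:ℝ) ∈ Set.Icc (0:ℝ) 1 := by norm_num
    have hstruct := legStruct hr hr1 hρ1 hx0 ha φ F (fun u => rfl) h0J hFs hposJ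
    have hcont0 : Continuous (fun u => F u 0) :=
      (continuous_apply 0).comp (continuous_subtype_val.comp
        (continuous_subtype_val.comp (φ.continuous.comp continuous_projIcc)))
    have hginj : Set.InjOn (fun u => F u 0) (Set.Icc (0:ℝ) 1) := by
      intro u hu v hv huv
      have hFeq : F u = F v := by
        funext n
        rw [hstruct u hu n, hstruct v hv n]
        show (∏ i ∈ Finset.range n, a i) * (fun u => F u 0) u
          = (∏ i ∈ Finset.range n, a i) * (fun u => F u 0) v
        rw [huv]
      have heq : φ (Set.projIcc 0 1 zero_le_one u) = φ (Set.projIcc 0 1 zero_le_one v) :=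
        Subtype.ext (Subtype.ext hFeq)
      have h3 := φ.injective heq
      rw [Set.projIcc_of_mem zero_le_one hu, Set.projIcc_of_mem zero_le_one hv] at h3
      exact congrArg Subtype.val h3
    -- two comparison points
    have hlow : f ⟨0, by norm_num⟩ ∈ Set.range f := Set.mem_range_self _
    have hhigh : f ⟨1, by norm_num⟩ ∈ Set.range f := Set.mem_range_self _
    set v0 : ℝ := ((φ.symm ⟨f ⟨0, by norm_num⟩, hlow⟩ : Set.Icc (0:ℝ) 1) : ℝ) with hv0
    set v1 : ℝ := ((φ.symm ⟨f ⟨1, by norm_num⟩, hhigh⟩ : Set.Icc (0:ℝ) 1) : ℝ) with hv1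
    have hv0mem : v0 ∈ Set.Icc (0:ℝ) 1 := (φ.symm _).2
    have hv1mem : v1 ∈ Set.Icc (0:ℝ) 1 := (φ.symm _).2
    have hprojv0 : Set.projIcc 0 1 zero_le_one v0 = φ.symm ⟨f ⟨0, by norm_num⟩, hlow⟩ := by
      rw [Set.projIcc_of_mem zero_le_one hv0mem]
    have hprojv1 : Set.projIcc 0 1 zero_le_one v1 = φ.symm ⟨f ⟨1, by norm_num⟩, hhigh⟩ := by
      rw [Set.projIcc_of_mem zero_le_one hv1mem]
    have hgv0 : F v0 0 = x / 2 := by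
      show ((φ (Set.projIcc 0 1 zero_le_one v0) : Mset r ρ) : ℕ → ℝ) 0 = x / 2
      rw [hprojv0, φ.apply_symm_apply]
      show (1/2 + (0:ℝ) * (T - 1/2)) * ((∏ i ∈ Finset.range 0, a i) * x) = x / 2
      simp only [Finset.prod_range_zero, one_mul]; ring
    have hgv1 : F v1 0 = T * x := by
      show ((φ (Set.projIcc 0 1 zero_le_one v1) : Mset r ρ) : ℕ → ℝ) 0 = T * x
      rw [hprojv1, φ.apply_symm_apply]
      show (1/2 + (1:ℝ) * (T - 1/2)) * ((∏ i ∈ Finset.range 0, a i) * x) = T * x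
      simp only [Finset.prod_range_zero, one_mul]; ring
    have hg0 : F 0 0 = x := by rw [hFs]; simp
    have hv0ne : v0 ≠ 0 := by
      intro hc; rw [hc] at hgv0; rw [hg0] at hgv0; linarith
    have hv1ne : v1 ≠ 0 := by
      intro hc; rw [hc] at hgv1; rw [hg0] at hgv1; nlinarith
    have hv0pos : 0 < v0 := lt_of_le_of_ne hv0mem.1 (Ne.symm hv0ne)
    have hv1pos : 0 < v1 := lt_of_le_of_ne hv1mem.1 (Ne.symm hv1ne)
    refine noIntVal hcont0.continuousOn hginj h0J hv0mem hv1mem ?_ ?_ ?_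
    · show F v0 0 < F 0 0
      rw [hgv0, hg0]; linarith
    · show F 0 0 < F v1 0
      rw [hgv1, hg0]; nlinarith
    · intro hmem
      rcases Set.mem_uIcc.mp hmem with ⟨h', _⟩ | ⟨h', _⟩ <;> linarith
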